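/- Let P1, P2, P3, P4 be noncoplanar points in ℝ³ ordered so that V = det[[1,1,1,1],[x1,x2,x3,x4],[y1,y2,y3,y4],[z1,z2,z3,z4]] > 0, and let P* = (x*, y*, z*) lie strictly inside the tetrahedron P1P2P3P4. For j = 1, …, 4 let V_j be the determinant obtained by replacing the j-th column of the above 4×4 matrix by the column (1, x*, y*, z*)ᵀ, and set m_j* = |P*P_j|·V_j. Then all m_j* are positive, and the function F(x,y,z) = Σ_{j=1}^4 m_j* √((x−x_j)² + (y−y_j)² + (z−z_j)²) attains its global minimum at P*, with minimum value F(x*, y*, z*) = −det[[1,1,1,1,1],[x*,x1,x2,x3,x4],[y*,y1,y2,y3,y4],[z*,z1,z2,z3,z4],[x*²+y*²+z*², x1²+y1²+z1², x2²+y2²+z2², x3²+y3²+z3², x4²+y4²+z4²]]. -/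

import Mathlib

set_option maxHeartbeats 2000000 in
private lemma det4expand (a00 a01 a02 a03 a10 a11 a12 a13 a20 a21 a22 a23 a30 a31 a32 a33 : ℝ) :
    Matrix.det !![(a00:ℝ), a01, a02, a03;
      a10, a11, a12, a13;
      a20, a21, a22, a23;
      a30, a31, a32, a33] =
    a00*a11*a22*a33 - a00*a11*a23*a32 - a00*a12*a21*a33 + a00*a12*a23*a31 + a00*a13*a21*a32 - a00*a13*a22*a31 - a01*a10*a22*a33 + a01*a10*a23*a32 + a01*a12*a20*a33 - a01*a12*a23*a30 - a01*a13*a20*a32 + a01*a13*a22*a30 + a02*a10*a21*a33 - a02*a10*a23*a31 - a02*a11*a20*a33 + a02*a11*a23*a30 + a02*a13*a20*a31 - a02*a13*a21*a30 - a03*a10*a21*a32 + a03*a10*a22*a31 + a03*a11*a20*a32 - a03*a11*a22*a30 - a03*a12*a20*a31 + a03*a12*a21*a30 := by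
  simp [Matrix.det_succ_row_zero, Fin.sum_univ_succ, Fin.succAbove]
  ring

set_option maxHeartbeats 4000000 in
private lemma det5expand (b00 b01 b02 b03 b04 b10 b11 b12 b13 b14 b20 b21 b22 b23 b24 b30 b31 b32 b33 b34 b40 b41 b42 b43 b44 : ℝ) :
    Matrix.det !![(b00:ℝ), b01, b02, b03, b04;
      b10, b11, b12, b13, b14;
      b20, b21, b22, b23, b24;
      b30, b31, b32, b33, b34;
      b40, b41, b42, b43, b44] =
    b00*b11*b22*b33*b44 - b00*b11*b22*b34*b43 - b00*b11*b23*b32*b44 + b00*b11*b23*b34*b42 + b00*b11*b24*b32*b43 - b00*b11*b24*b33*b42 - b00*b12*b21*b33*b44 + b00*b12*b21*b34*b43 + b00*b12*b23*b31*b44 - b00*b12*b23*b34*b41 - b00*b12*b24*b31*b43 + b00*b12*b24*b33*b41 + b00*b13*b21*b32*b44 - b00*b13*b21*b34*b42 - b00*b13*b22*b31*b44 + b00*b13*b22*b34*b41 + b00*b13*b24*b31*b42 - b00*b13*b24*b32*b41 - b00*b14*b21*b32*b43 + b00*b14*b21*b33*b42 + b00*b14*b22*b31*b43 - b00*b14*b22*b33*b41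 - b00*b14*b23*b31*b42 + b00*b14*b23*b32*b41 - b01*b10*b22*b33*b44 + b01*b10*b22*b34*b43 + b01*b10*b23*b32*b44 - b01*b10*b23*b34*b42 - b01*b10*b24*b32*b43 + b01*b10*b24*b33*b42 + b01*b12*b20*b33*b44 - b01*b12*b20*b34*b43 - b01*b12*b23*b30*b44 + b01*b12*b23*b34*b40 + b01*b12*b24*b30*b43 - b01*b12*b24*b33*b40 - b01*b13*b20*b32*b44 + b01*b13*b20*b34*b42 + b01*b13*b22*b30*b44 - b01*b13*b22*b34*b40 - b01*b13*b24*b30*b42 + b01*b13*b24*b32*b40 + b01*b14*b20*b32*b43 - b01*b14*b20*b33*b42 - b01*b14*b22*b30*b43 + b01*b14*b22*b33*b40 + b01*b14*b23*b30*b42 - b01*b14*b23*b32*b40 + b02*b10*b21*b33*b44 - b02*b10*b21*b34*b43 - b02*b10*b23*b31*b44 + b02*b10*b23*b34*b41 + b02*b10*b24*b31*b43 - b02*b10*b24*b33*b41 - b02*b11*b20*b33*b44 + b02*b11*b20*b34*b43 + b02*b11*b23*b30*b44 - b02*b11*b23*b34*b40 - b02*b11*b24*b30*b43 + b02*b11*b24*b33*b40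 + b02*b13*b20*b31*b44 - b02*b13*b20*b34*b41 - b02*b13*b21*b30*b44 + b02*b13*b21*b34*b40 + b02*b13*b24*b30*b41 - b02*b13*b24*b31*b40 - b02*b14*b20*b31*b43 + b02*b14*b20*b33*b41 + b02*b14*b21*b30*b43 - b02*b14*b21*b33*b40 - b02*b14*b23*b30*b41 + b02*b14*b23*b31*b40 - b03*b10*b21*b32*b44 + b03*b10*b21*b34*b42 + b03*b10*b22*b31*b44 - b03*b10*b22*b34*b41 - b03*b10*b24*b31*b42 + b03*b10*b24*b32*b41 + b03*b11*b20*b32*b44 - b03*b11*b20*b34*b42 - b03*b11*b22*b30*b44 + b03*b11*b22*b34*b40 + b03*b11*b24*b30*b42 - b03*b11*b24*b32*b40 - b03*b12*b20*b31*b44 + b03*b12*b20*b34*b41 + b03*b12*b21*b30*b44 - b03*b12*b21*b34*b40 - b03*b12*b24*b30*b41 + b03*b12*b24*b31*b40 + b03*b14*b20*b31*b42 - b03*b14*b20*b32*b41 - b03*b14*b21*b30*b42 + b03*b14*b21*b32*b40 + b03*b14*b22*b30*b41 - b03*b14*b22*b31*b40 + b04*b10*b21*b32*b43 - b04*b10*b21*b33*b42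 - b04*b10*b22*b31*b43 + b04*b10*b22*b33*b41 + b04*b10*b23*b31*b42 - b04*b10*b23*b32*b41 - b04*b11*b20*b32*b43 + b04*b11*b20*b33*b42 + b04*b11*b22*b30*b43 - b04*b11*b22*b33*b40 - b04*b11*b23*b30*b42 + b04*b11*b23*b32*b40 + b04*b12*b20*b31*b43 - b04*b12*b20*b33*b41 - b04*b12*b21*b30*b43 + b04*b12*b21*b33*b40 + b04*b12*b23*b30*b41 - b04*b12*b23*b31*b40 - b04*b13*b20*b31*b42 + b04*b13*b20*b32*b41 + b04*b13*b21*b30*b42 - b04*b13*b21*b32*b40 - b04*b13*b22*b30*b41 + b04*b13*b22*b31*b40 := by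
  simp [Matrix.det_succ_row_zero, Fin.sum_univ_succ, Fin.succAbove]
  ring

private lemma cs3 (a b c u v w : ℝ) :
    a*u + b*v + c*w ≤ Real.sqrt (a^2+b^2+c^2) * Real.sqrt (u^2+v^2+w^2) := by
  rw [← Real.sqrt_mul (by positivity)]
  apply Real.le_sqrt_of_sq_le
  nlinarith [sq_nonneg (a*v-b*u), sq_nonneg (a*w-c*u), sq_nonneg (b*w-c*v)]


set_option maxHeartbeats 4000000 in
/-- 3D inverse Fermat–Torricelli problem: if `P*` lies strictly inside the
tetrahedron `P1P2P3P4` (with `V > 0`), the weights `m_j* = |P*P_j|·V_j` are all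
positive and `F` attains its global minimum at `P*`, with minimum value given
by minus the 5×5 determinant. -/
theorem inverse_problem_minimum_3d
    (x1 y1 z1 x2 y2 z2 x3 y3 z3 x4 y4 z4 xs ys zs : ℝ)
    (hV : 0 < Matrix.det !![(1:ℝ), 1, 1, 1; x1, x2, x3, x4;
        y1, y2, y3, y4; z1, z2, z3, z4])
    (hint : ∃ l1 l2 l3 l4 : ℝ, 0 < l1 ∧ 0 < l2 ∧ 0 < l3 ∧ 0 < l4 ∧
        l1 + l2 + l3 + l4 = 1 ∧
        xs = l1*x1 + l2*x2 + l3*x3 + l4*x4 ∧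
        ys = l1*y1 + l2*y2 + l3*y3 + l4*y4 ∧
        zs = l1*z1 + l2*z2 + l3*z3 + l4*z4)
    (m1 m2 m3 m4 : ℝ)
    (hm1 : m1 = Real.sqrt ((xs-x1)^2 + (ys-y1)^2 + (zs-z1)^2)
        * Matrix.det !![(1:ℝ), 1, 1, 1; xs, x2, x3, x4;
            ys, y2, y3, y4; zs, z2, z3, z4])
    (hm2 : m2 = Real.sqrt ((xs-x2)^2 + (ys-y2)^2 + (zs-z2)^2)
        * Matrix.det !![(1:ℝ), 1, 1, 1; x1, xs, x3, x4;
            y1, ys, y3, y4; z1, zs, z3, z4])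
    (hm3 : m3 = Real.sqrt ((xs-x3)^2 + (ys-y3)^2 + (zs-z3)^2)
        * Matrix.det !![(1:ℝ), 1, 1, 1; x1, x2, xs, x4;
            y1, y2, ys, y4; z1, z2, zs, z4])
    (hm4 : m4 = Real.sqrt ((xs-x4)^2 + (ys-y4)^2 + (zs-z4)^2)
        * Matrix.det !![(1:ℝ), 1, 1, 1; x1, x2, x3, xs;
            y1, y2, y3, ys; z1, z2, z3, zs])
    (F : ℝ → ℝ → ℝ → ℝ)
    (hF : ∀ x y z, F x y z =
        m1 * Real.sqrt ((x-x1)^2 + (y-y1)^2 + (z-z1)^2)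
      + m2 * Real.sqrt ((x-x2)^2 + (y-y2)^2 + (z-z2)^2)
      + m3 * Real.sqrt ((x-x3)^2 + (y-y3)^2 + (z-z3)^2)
      + m4 * Real.sqrt ((x-x4)^2 + (y-y4)^2 + (z-z4)^2)) :
    0 < m1 ∧ 0 < m2 ∧ 0 < m3 ∧ 0 < m4 ∧
    (∀ x y z : ℝ, F xs ys zs ≤ F x y z) ∧
    F xs ys zs = -Matrix.det
      !![(1:ℝ), 1, 1, 1, 1;
         xs, x1, x2, x3, x4;
         ys, y1, y2, y3, y4;
         zs, z1, z2, z3, z4;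
         xs^2 + ys^2 + zs^2, x1^2 + y1^2 + z1^2, x2^2 + y2^2 + z2^2,
           x3^2 + y3^2 + z3^2, x4^2 + y4^2 + z4^2] := by
  obtain ⟨l1, l2, l3, l4, hl1, hl2, hl3, hl4, hsum, hx, hy, hz⟩ := hint
  have hl4e : l4 = 1 - l1 - l2 - l3 := by linarith only [hsum]
  have hW1 : Matrix.det !![(1:ℝ), 1, 1, 1; xs, x2, x3, x4; ys, y2, y3, y4; zs, z2, z3, z4] = l1 * Matrix.det !![(1:ℝ), 1, 1, 1; x1, x2, x3, x4; y1, y2, y3, y4; z1, z2, z3, z4] := by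
    rw [hx, hy, hz, hl4e, det4expand, det4expand]; ring
  have hW2 : Matrix.det !![(1:ℝ), 1, 1, 1; x1, xs, x3, x4; y1, ys, y3, y4; z1, zs, z3, z4] = l2 * Matrix.det !![(1:ℝ), 1, 1, 1; x1, x2, x3, x4; y1, y2, y3, y4; z1, z2, z3, z4] := by
    rw [hx, hy, hz, hl4e, det4expand, det4expand]; ring
  have hW3 : Matrix.det !![(1:ℝ), 1, 1, 1; x1, x2, xs, x4; y1, y2, ys, y4; z1, z2, zs, z4] = l3 * Matrix.det !![(1:ℝ), 1, 1, 1; x1, x2, x3, x4; y1, y2, y3, y4; z1, z2, z3, z4] := by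
    rw [hx, hy, hz, hl4e, det4expand, det4expand]; ring
  have hW4 : Matrix.det !![(1:ℝ), 1, 1, 1; x1, x2, x3, xs; y1, y2, y3, ys; z1, z2, z3, zs] = l4 * Matrix.det !![(1:ℝ), 1, 1, 1; x1, x2, x3, x4; y1, y2, y3, y4; z1, z2, z3, z4] := by
    rw [hx, hy, hz, hl4e, det4expand, det4expand]; ring
  have hA1pos : 0 < (xs-x1)^2 + (ys-y1)^2 + (zs-z1)^2 := by
    by_contra hcon
    push_neg at hcon
    have ht1 : xs - x1 = 0 := by nlinarith only [hcon, sq_nonneg (xs-x1), sq_nonneg (ys-y1), sq_nonneg (zs-z1)]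
    have ht2 : ys - y1 = 0 := by nlinarith only [hcon, sq_nonneg (xs-x1), sq_nonneg (ys-y1), sq_nonneg (zs-z1)]
    have ht3 : zs - z1 = 0 := by nlinarith only [hcon, sq_nonneg (xs-x1), sq_nonneg (ys-y1), sq_nonneg (zs-z1)]
    have hxs : xs = x1 := by linarith only [ht1]
    have hys : ys = y1 := by linarith only [ht2]
    have hzs : zs = z1 := by linarith only [ht3]
    rw [hxs, hys, hzs] at hW1
    have h2 : (1 - l1) * Matrix.det !![(1:ℝ), 1, 1, 1; x1, x2, x3, x4; y1, y2, y3, y4; z1, z2, z3, z4] = 0 := by linear_combination hW1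
    rcases mul_eq_zero.mp h2 with h3 | h3
    · linarith only [hsum, hl1, hl2, hl3, hl4, h3]
    · linarith only [hV, h3]
  have hA2pos : 0 < (xs-x2)^2 + (ys-y2)^2 + (zs-z2)^2 := by
    by_contra hcon
    push_neg at hcon
    have ht1 : xs - x2 = 0 := by nlinarith only [hcon, sq_nonneg (xs-x2), sq_nonneg (ys-y2), sq_nonneg (zs-z2)]
    have ht2 : ys - y2 = 0 := by nlinarith only [hcon, sq_nonneg (xs-x2), sq_nonneg (ys-y2), sq_nonneg (zs-z2)]
    have ht3 : zs - z2 = 0 := by nlinarith only [hcon, sq_nonneg (xs-x2), sq_nonneg (ys-y2), sq_nonneg (zs-z2)]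
    have hxs : xs = x2 := by linarith only [ht1]
    have hys : ys = y2 := by linarith only [ht2]
    have hzs : zs = z2 := by linarith only [ht3]
    rw [hxs, hys, hzs] at hW2
    have h2 : (1 - l2) * Matrix.det !![(1:ℝ), 1, 1, 1; x1, x2, x3, x4; y1, y2, y3, y4; z1, z2, z3, z4] = 0 := by linear_combination hW2
    rcases mul_eq_zero.mp h2 with h3 | h3
    · linarith only [hsum, hl1, hl2, hl3, hl4, h3]
    · linarith only [hV, h3]
  have hA3pos : 0 < (xs-x3)^2 + (ys-y3)^2 + (zs-z3)^2 := by
    by_contra hcon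
    push_neg at hcon
    have ht1 : xs - x3 = 0 := by nlinarith only [hcon, sq_nonneg (xs-x3), sq_nonneg (ys-y3), sq_nonneg (zs-z3)]
    have ht2 : ys - y3 = 0 := by nlinarith only [hcon, sq_nonneg (xs-x3), sq_nonneg (ys-y3), sq_nonneg (zs-z3)]
    have ht3 : zs - z3 = 0 := by nlinarith only [hcon, sq_nonneg (xs-x3), sq_nonneg (ys-y3), sq_nonneg (zs-z3)]
    have hxs : xs = x3 := by linarith only [ht1]
    have hys : ys = y3 := by linarith only [ht2]
    have hzs : zs = z3 := by linarith only [ht3]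
    rw [hxs, hys, hzs] at hW3
    have h2 : (1 - l3) * Matrix.det !![(1:ℝ), 1, 1, 1; x1, x2, x3, x4; y1, y2, y3, y4; z1, z2, z3, z4] = 0 := by linear_combination hW3
    rcases mul_eq_zero.mp h2 with h3 | h3
    · linarith only [hsum, hl1, hl2, hl3, hl4, h3]
    · linarith only [hV, h3]
  have hA4pos : 0 < (xs-x4)^2 + (ys-y4)^2 + (zs-z4)^2 := by
    by_contra hcon
    push_neg at hcon
    have ht1 : xs - x4 = 0 := by nlinarith only [hcon, sq_nonneg (xs-x4), sq_nonneg (ys-y4), sq_nonneg (zs-z4)]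
    have ht2 : ys - y4 = 0 := by nlinarith only [hcon, sq_nonneg (xs-x4), sq_nonneg (ys-y4), sq_nonneg (zs-z4)]
    have ht3 : zs - z4 = 0 := by nlinarith only [hcon, sq_nonneg (xs-x4), sq_nonneg (ys-y4), sq_nonneg (zs-z4)]
    have hxs : xs = x4 := by linarith only [ht1]
    have hys : ys = y4 := by linarith only [ht2]
    have hzs : zs = z4 := by linarith only [ht3]
    rw [hxs, hys, hzs] at hW4
    have h2 : (1 - l4) * Matrix.det !![(1:ℝ), 1, 1, 1; x1, x2, x3, x4; y1, y2, y3, y4; z1, z2, z3, z4] = 0 := by linear_combination hW4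
    rcases mul_eq_zero.mp h2 with h3 | h3
    · linarith only [hsum, hl1, hl2, hl3, hl4, h3]
    · linarith only [hV, h3]
  set VV := Matrix.det !![(1:ℝ), 1, 1, 1; x1, x2, x3, x4; y1, y2, y3, y4; z1, z2, z3, z4] with hVVdef
  set W1 := Matrix.det !![(1:ℝ), 1, 1, 1; xs, x2, x3, x4; ys, y2, y3, y4; zs, z2, z3, z4] with hW1def
  set W2 := Matrix.det !![(1:ℝ), 1, 1, 1; x1, xs, x3, x4; y1, ys, y3, y4; z1, zs, z3, z4] with hW2def
  set W3 := Matrix.det !![(1:ℝ), 1, 1, 1; x1, x2, xs, x4; y1, y2, ys, y4; z1, z2, zs, z4] with hW3def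
  set W4 := Matrix.det !![(1:ℝ), 1, 1, 1; x1, x2, x3, xs; y1, y2, y3, ys; z1, z2, z3, zs] with hW4def
  set A1 := (xs-x1)^2 + (ys-y1)^2 + (zs-z1)^2 with hA1def
  set A2 := (xs-x2)^2 + (ys-y2)^2 + (zs-z2)^2 with hA2def
  set A3 := (xs-x3)^2 + (ys-y3)^2 + (zs-z3)^2 with hA3def
  set A4 := (xs-x4)^2 + (ys-y4)^2 + (zs-z4)^2 with hA4def
  have hW1pos : 0 < W1 := by rw [hW1]; exact mul_pos hl1 hV
  have hm1pos : 0 < m1 := by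
    rw [hm1]; exact mul_pos (Real.sqrt_pos.mpr hA1pos) hW1pos
  have hW2pos : 0 < W2 := by rw [hW2]; exact mul_pos hl2 hV
  have hm2pos : 0 < m2 := by
    rw [hm2]; exact mul_pos (Real.sqrt_pos.mpr hA2pos) hW2pos
  have hW3pos : 0 < W3 := by rw [hW3]; exact mul_pos hl3 hV
  have hm3pos : 0 < m3 := by
    rw [hm3]; exact mul_pos (Real.sqrt_pos.mpr hA3pos) hW3pos
  have hW4pos : 0 < W4 := by rw [hW4]; exact mul_pos hl4 hV
  have hm4pos : 0 < m4 := by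
    rw [hm4]; exact mul_pos (Real.sqrt_pos.mpr hA4pos) hW4pos
  have hself1 : Real.sqrt A1 * Real.sqrt A1 = A1 :=
    Real.mul_self_sqrt (by rw [hA1def]; positivity)
  have hself2 : Real.sqrt A2 * Real.sqrt A2 = A2 :=
    Real.mul_self_sqrt (by rw [hA2def]; positivity)
  have hself3 : Real.sqrt A3 * Real.sqrt A3 = A3 :=
    Real.mul_self_sqrt (by rw [hA3def]; positivity)
  have hself4 : Real.sqrt A4 * Real.sqrt A4 = A4 :=
    Real.mul_self_sqrt (by rw [hA4def]; positivity)
  have hkey : ∀ x y z : ℝ,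
      W1 * ((x-x1)*(xs-x1) + (y-y1)*(ys-y1) + (z-z1)*(zs-z1))
      + W2 * ((x-x2)*(xs-x2) + (y-y2)*(ys-y2) + (z-z2)*(zs-z2))
      + W3 * ((x-x3)*(xs-x3) + (y-y3)*(ys-y3) + (z-z3)*(zs-z3))
      + W4 * ((x-x4)*(xs-x4) + (y-y4)*(ys-y4) + (z-z4)*(zs-z4))
      = W1 * A1 + W2 * A2 + W3 * A3 + W4 * A4 := by
    intro x y z
    rw [hW1def, hW2def, hW3def, hW4def, hA1def, hA2def, hA3def, hA4def]
    rw [det4expand, det4expand, det4expand, det4expand]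
    ring
  have hvalue : W1 * A1 + W2 * A2 + W3 * A3 + W4 * A4 = -Matrix.det
      !![(1:ℝ), 1, 1, 1, 1;
         xs, x1, x2, x3, x4;
         ys, y1, y2, y3, y4;
         zs, z1, z2, z3, z4;
         xs^2 + ys^2 + zs^2, x1^2 + y1^2 + z1^2, x2^2 + y2^2 + z2^2,
           x3^2 + y3^2 + z3^2, x4^2 + y4^2 + z4^2] := by
    rw [hW1def, hW2def, hW3def, hW4def, hA1def, hA2def, hA3def, hA4def]
    rw [det4expand, det4expand, det4expand, det4expand, det5expand]
    ring
  have hFs : F xs ys zs = W1 * A1 + W2 * A2 + W3 * A3 + W4 * A4 := by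
    rw [hF, hm1, hm2, hm3, hm4, ← hA1def, ← hA2def, ← hA3def, ← hA4def]
    linear_combination W1 * hself1 + W2 * hself2 + W3 * hself3 + W4 * hself4
  refine ⟨hm1pos, hm2pos, hm3pos, hm4pos, ?_, hFs.trans hvalue⟩
  intro x y z
  rw [hFs, hF x y z, hm1, hm2, hm3, hm4]
  have hcs1 : (x-x1)*(xs-x1) + (y-y1)*(ys-y1) + (z-z1)*(zs-z1) ≤
      Real.sqrt ((x-x1)^2 + (y-y1)^2 + (z-z1)^2) * Real.sqrt A1 := by
    rw [hA1def]
    exact cs3 (x-x1) (y-y1) (z-z1) (xs-x1) (ys-y1) (zs-z1)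
  have hg1 := mul_le_mul_of_nonneg_left hcs1 hW1pos.le
  have hcs2 : (x-x2)*(xs-x2) + (y-y2)*(ys-y2) + (z-z2)*(zs-z2) ≤
      Real.sqrt ((x-x2)^2 + (y-y2)^2 + (z-z2)^2) * Real.sqrt A2 := by
    rw [hA2def]
    exact cs3 (x-x2) (y-y2) (z-z2) (xs-x2) (ys-y2) (zs-z2)
  have hg2 := mul_le_mul_of_nonneg_left hcs2 hW2pos.le
  have hcs3 : (x-x3)*(xs-x3) + (y-y3)*(ys-y3) + (z-z3)*(zs-z3) ≤
      Real.sqrt ((x-x3)^2 + (y-y3)^2 + (z-z3)^2) * Real.sqrt A3 := by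
    rw [hA3def]
    exact cs3 (x-x3) (y-y3) (z-z3) (xs-x3) (ys-y3) (zs-z3)
  have hg3 := mul_le_mul_of_nonneg_left hcs3 hW3pos.le
  have hcs4 : (x-x4)*(xs-x4) + (y-y4)*(ys-y4) + (z-z4)*(zs-z4) ≤
      Real.sqrt ((x-x4)^2 + (y-y4)^2 + (z-z4)^2) * Real.sqrt A4 := by
    rw [hA4def]
    exact cs3 (x-x4) (y-y4) (z-z4) (xs-x4) (ys-y4) (zs-z4)
  have hg4 := mul_le_mul_of_nonneg_left hcs4 hW4pos.le
  have hk := hkey x y z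
  linarith only [hg1, hg2, hg3, hg4, hk]
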